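/- Let n ≥ 1, ε ≥ 0, and T > 0. Let P, Q, B̃, D ∈ Matrix (Fin n) (Fin n) ℝ with P symmetric and positive semidefinite, Q + Qᵀ = B̃, and Q_{xx} = B̃ * D − Dᵀ * P * D. Let A : ℝ → Matrix (Fin n) (Fin n) ℝ be continuous with A(t) symmetric for every t, and let W : ℝ → (Fin n → ℝ) be continuously differentiable satisfying P *ᵥ W'(t) = −(1/2)((A(t) * Q + Q * A(t)) *ᵥ W(t)) + ε (Q_{xx} *ᵥ W(t)) for all t ∈ [0,T]. If the boundary contribution is nonpositive, i.e. −W(t) ⬝ᵥ ((A(t) * B̃) *ᵥ W(t)) + 2ε W(t) ⬝ᵥ ((B̃ * D) *ᵥ W(t)) ≤ 0 for all t ∈ [0,T], then the discrete energy estimate holds: W(T) ⬝ᵥ (P *ᵥ W(T)) + 2ε ∫_0^T (D *ᵥ W(t)) ⬝ᵥ (P *ᵥ (D *ᵥ W(t))) dt ≤ W(0) ⬝ᵥ (P *ᵥ W(0)). -/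

import Mathlib

open Matrix intervalIntegral

/-- `xᵀ M x = xᵀ Mᵀ x`. -/
lemma dot_mulVec_transpose {n : ℕ} (M : Matrix (Fin n) (Fin n) ℝ) (x : Fin n → ℝ) :
    x ⬝ᵥ (M *ᵥ x) = x ⬝ᵥ (Mᵀ *ᵥ x) := by
  rw [Matrix.dotProduct_mulVec, ← Matrix.mulVec_transpose, dotProduct_comm]

/-- Semi-discrete energy estimate: if the boundary contribution in the semi-discrete
energy rate is nonpositive on `[0,T]`, then
`W(T)ᵀPW(T) + 2ε ∫_0^T (DW)ᵀP(DW) dt ≤ W(0)ᵀPW(0)`. -/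
theorem semidiscrete_energy_estimate
    (n : ℕ) (hn : 1 ≤ n) (ε : ℝ) (hε : 0 ≤ ε) (T : ℝ) (hT : 0 < T)
    (P Q Bt D Qxx : Matrix (Fin n) (Fin n) ℝ)
    (hPsymm : Pᵀ = P) (hPpsd : P.PosSemidef)
    (hSBP : Q + Qᵀ = Bt) (hQxx : Qxx = Bt * D - Dᵀ * P * D)
    (A : ℝ → Matrix (Fin n) (Fin n) ℝ)
    (hAcont : ∀ i j, Continuous fun t => A t i j)
    (hAsymm : ∀ t, (A t)ᵀ = A t)
    (W W' : ℝ → Fin n → ℝ) (hW : ∀ t, HasDerivAt W (W' t) t)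
    (hW'cont : Continuous W')
    (hscheme : ∀ t ∈ Set.Icc (0 : ℝ) T, P *ᵥ W' t =
      -(1 / 2 : ℝ) • ((A t * Q + Q * A t) *ᵥ W t) + ε • (Qxx *ᵥ W t))
    (hBC : ∀ t ∈ Set.Icc (0 : ℝ) T,
      -(W t ⬝ᵥ ((A t * Bt) *ᵥ W t)) + 2 * ε * (W t ⬝ᵥ ((Bt * D) *ᵥ W t)) ≤ 0) :
    W T ⬝ᵥ (P *ᵥ W T)
        + 2 * ε * ∫ t in (0 : ℝ)..T, (D *ᵥ W t) ⬝ᵥ (P *ᵥ (D *ᵥ W t))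
      ≤ W 0 ⬝ᵥ (P *ᵥ W 0) := by
  have hWcont : Continuous W := by
    rw [continuous_iff_continuousAt]
    exact fun t => (hW t).continuousAt
  have hWi : ∀ i t, HasDerivAt (fun s => W s i) (W' t i) t := by
    intro i t
    exact (hasDerivAt_pi.mp (hW t)) i
  -- energy and its derivative
  set F : ℝ → ℝ := fun t => W t ⬝ᵥ (P *ᵥ W t) with hF
  set f : ℝ → ℝ := fun t => 2 * (W t ⬝ᵥ (P *ᵥ W' t)) with hf
  set g : ℝ → ℝ := fun t => (D *ᵥ W t) ⬝ᵥ (P *ᵥ (D *ᵥ W t)) with hg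
  have hderiv : ∀ t, HasDerivAt F (f t) t := by
    intro t
    have h1 : HasDerivAt (fun s => W s ⬝ᵥ (P *ᵥ W s))
        (W' t ⬝ᵥ (P *ᵥ W t) + W t ⬝ᵥ (P *ᵥ W' t)) t := by
      simp only [dotProduct, Matrix.mulVec, ← Finset.sum_add_distrib]
      apply HasDerivAt.fun_sum
      intro i _
      have hPW : HasDerivAt (fun s => ∑ j, P i j * W s j)
          (∑ j, P i j * W' t j) t :=
        HasDerivAt.fun_sum fun j _ => (hWi j t).const_mul (P i j)
      simpa [mul_comm, mul_assoc, mul_left_comm, add_comm] using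
        ((hWi i t).fun_mul hPW)
    have hsymm : W' t ⬝ᵥ (P *ᵥ W t) = W t ⬝ᵥ (P *ᵥ W' t) := by
      rw [Matrix.dotProduct_mulVec, ← Matrix.mulVec_transpose, hPsymm,
        dotProduct_comm]
    rw [hf]
    simpa [hsymm, two_mul] using h1
  -- pointwise bound on the derivative
  have hptwise : ∀ t ∈ Set.Icc (0 : ℝ) T, f t + 2 * ε * g t ≤ 0 := by
    intro t ht
    have hPW' : W t ⬝ᵥ (P *ᵥ W' t)
        = -(1 / 2 : ℝ) * (W t ⬝ᵥ ((A t * Q + Q * A t) *ᵥ W t))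
          + ε * (W t ⬝ᵥ (Qxx *ᵥ W t)) := by
      rw [hscheme t ht]
      simp [dotProduct_add, dotProduct_smul, smul_eq_mul]
    have hQA : W t ⬝ᵥ ((A t * Q + Q * A t) *ᵥ W t)
        = W t ⬝ᵥ ((A t * Bt) *ᵥ W t) := by
      have h2 : W t ⬝ᵥ ((Q * A t) *ᵥ W t) = W t ⬝ᵥ ((A t * Qᵀ) *ᵥ W t) := by
        rw [dot_mulVec_transpose (Q * A t)]
        simp [Matrix.transpose_mul, hAsymm]
      rw [Matrix.add_mulVec, dotProduct_add, h2, ← dotProduct_add,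
        ← Matrix.add_mulVec, ← Matrix.mul_add, hSBP]
    have hQxxW : W t ⬝ᵥ (Qxx *ᵥ W t)
        = W t ⬝ᵥ ((Bt * D) *ᵥ W t) - g t := by
      rw [hQxx, Matrix.sub_mulVec, dotProduct_sub]
      congr 1
      rw [hg]
      rw [show Dᵀ * P * D = Dᵀ * (P * D) from Matrix.mul_assoc _ _ _, ← Matrix.mulVec_mulVec,
        Matrix.dotProduct_mulVec, Matrix.vecMul_transpose, ← Matrix.mulVec_mulVec,
        Matrix.dotProduct_mulVec, ← Matrix.mulVec_transpose, hPsymm,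
        dotProduct_comm]
    have := hBC t ht
    simp only [hf, hPW', hQA, hQxxW]
    nlinarith [this]
  -- continuity / integrability
  have hgcont : Continuous g := by
    rw [hg]
    simp only [dotProduct, Matrix.mulVec]
    refine continuous_finset_sum _ fun i _ => Continuous.mul ?_ ?_
    · exact continuous_finset_sum _ fun j _ =>
        continuous_const.mul ((continuous_apply j).comp hWcont)
    · refine continuous_finset_sum _ fun j _ => Continuous.mul continuous_const ?_
      exact continuous_finset_sum _ fun k _ =>
        continuous_const.mul ((continuous_apply k).comp hWcont)
  have hfcont : Continuous f := by
    rw [hf]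
    refine continuous_const.mul ?_
    simp only [dotProduct, Matrix.mulVec]
    refine continuous_finset_sum _ fun i _ => Continuous.mul
      ((continuous_apply i).comp hWcont) ?_
    exact continuous_finset_sum _ fun j _ =>
      continuous_const.mul ((continuous_apply j).comp hW'cont)
  have hfint : IntervalIntegrable f MeasureTheory.volume 0 T :=
    hfcont.intervalIntegrable 0 T
  have hgint : IntervalIntegrable g MeasureTheory.volume 0 T :=
    hgcont.intervalIntegrable 0 T
  -- FTC
  have hFTC : F T - F 0 = ∫ t in (0 : ℝ)..T, f t :=
    (intervalIntegral.integral_eq_sub_of_hasDerivAt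
      (fun t _ => hderiv t) hfint).symm
  have hsum : (∫ t in (0 : ℝ)..T, (f t + 2 * ε * g t))
      = (∫ t in (0 : ℝ)..T, f t) + 2 * ε * ∫ t in (0 : ℝ)..T, g t := by
    rw [intervalIntegral.integral_add hfint (hgint.const_mul (2 * ε))]
    congr 1
    exact intervalIntegral.integral_const_mul _ _
  have hneg : (∫ t in (0 : ℝ)..T, (f t + 2 * ε * g t)) ≤ 0 := by
    have h0 : (∫ t in (0 : ℝ)..T, (0 : ℝ)) = 0 := by simp
    calc (∫ t in (0 : ℝ)..T, (f t + 2 * ε * g t)) ≤ ∫ t in (0 : ℝ)..T, (0 : ℝ) := by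
          apply intervalIntegral.integral_mono_on hT.le
            (hfint.add (hgint.const_mul (2 * ε))) intervalIntegrable_const
          intro t ht
          exact hptwise t ht
      _ = 0 := h0
  have : F T - F 0 + 2 * ε * (∫ t in (0 : ℝ)..T, g t) ≤ 0 := by
    rw [hFTC]; rw [hsum] at hneg; linarith
  simp only [hF, hg] at this ⊢
  linarith
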